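/- Let G be a finite group whose order is divisible by at least two distinct primes, suppose that every 2-maximal subgroup of G is a Hall subgroup of G, and suppose G is not supersolvable. If K < M < G with K normal in M, M normal in G, K maximal in M, and M maximal in G, then the indices |G : M| = p and |M : K| = q are distinct primes, p divides |G| but p² does not divide |G|, and q divides |G| but q² does not divide |G|. -/

import Mathlib

/-- A subgroup `H` of a group `G` is a Hall subgroup if its order and index are coprime. -/
def IsHallSubgroup {G : Type*} [Group G] (H : Subgroup G) : Prop :=
  Nat.Coprime (Nat.card H) H.index

/-- `H` is a maximal subgroup of `M` (both viewed as subgroups of the ambient group). -/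
def IsMaximalIn {G : Type*} [Group G] (H M : Subgroup G) : Prop :=
  H < M ∧ ∀ K : Subgroup G, H < K → K ≤ M → K = M

/-- `H` is a 2-maximal subgroup of `G`: it is maximal in some maximal subgroup of `G`. -/
def Is2Maximal {G : Type*} [Group G] (H : Subgroup G) : Prop :=
  ∃ M : Subgroup G, IsCoatom M ∧ IsMaximalIn H M

/-- A group is supersolvable if it has a chain of normal subgroups from `⊥` to `⊤`
with all successive quotients cyclic. -/
def IsSupersolvable (G : Type*) [Group G] : Prop :=
  ∃ (n : ℕ) (H : Fin (n + 1) → Subgroup G) (hnorm : ∀ i, (H i).Normal),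
    H 0 = ⊥ ∧ H (Fin.last n) = ⊤ ∧ Monotone H ∧
    ∀ i : Fin n, IsCyclic
      ((H i.succ).map (@QuotientGroup.mk' G _ (H i.castSucc) (hnorm i.castSucc)))

/-- A nontrivial finite group all of whose subgroups are trivial has prime order. -/
lemma aux_prime_card {Q : Type*} [Group Q] [Finite Q] (hnt : Nontrivial Q)
    (h : ∀ S : Subgroup Q, S = ⊥ ∨ S = ⊤) : (Nat.card Q).Prime := by
  have h1 : 1 < Nat.card Q := Finite.one_lt_card
  obtain ⟨r, hr, hrd⟩ := Nat.exists_prime_and_dvd (n := Nat.card Q) (by omega)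
  haveI : Fact r.Prime := ⟨hr⟩
  obtain ⟨x, hx⟩ := exists_prime_orderOf_dvd_card' r hrd
  have hxne : x ≠ 1 := by
    intro hx1
    rw [hx1, orderOf_one] at hx
    exact hr.ne_one hx.symm
  rcases h (Subgroup.zpowers x) with hb | ht
  · exact absurd (hb ▸ Subgroup.mem_zpowers x) (by simpa using hxne)
  · have : Nat.card Q = r := by
      rw [← Subgroup.card_top (G := Q), ← ht, Nat.card_zpowers, hx]
    rw [this]
    exact hr

/-- All subgroups of the quotient by a normal coatom are trivial. -/
lemma aux_quot {G : Type*} [Group G] (N : Subgroup G) [N.Normal] (h : IsCoatom N) :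
    ∀ S : Subgroup (G ⧸ N), S = ⊥ ∨ S = ⊤ := by
  intro S
  have hsurj := QuotientGroup.mk'_surjective N
  have hmapS := Subgroup.map_comap_eq_self_of_surjective hsurj S
  have hle : N ≤ S.comap (QuotientGroup.mk' N) := by
    intro n hn
    have h1 : ((n : G ⧸ N)) = 1 := (QuotientGroup.eq_one_iff n).mpr hn
    show ((n : G ⧸ N)) ∈ S
    rw [h1]
    exact S.one_mem
  rcases eq_or_lt_of_le hle with heq | hlt
  · left
    rw [← hmapS, ← heq]
    rw [Subgroup.map_eq_bot_iff, QuotientGroup.ker_mk']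
  · right
    have htop := h.2 _ hlt
    rw [← hmapS, htop]
    rw [← MonoidHom.range_eq_map, MonoidHom.range_eq_top_of_surjective _ hsurj]

/-- A normal coatom of a finite group has prime index. -/
lemma index_prime_of_coatom_normal {G : Type*} [Group G] [Finite G] (M : Subgroup G)
    (hM : IsCoatom M) [M.Normal] : M.index.Prime := by
  have h1 : M.index ≠ 1 := fun h => hM.1 (Subgroup.index_eq_one.mp h)
  have h0 : M.index ≠ 0 := Subgroup.index_ne_zero_of_finite
  have hnt : Nontrivial (G ⧸ M) := by
    rw [← Finite.one_lt_card_iff_nontrivial, ← Subgroup.index_eq_card]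
    omega
  rw [Subgroup.index_eq_card]
  exact aux_prime_card hnt (aux_quot M hM)

lemma coatom_subgroupOf {G : Type*} [Group G] {K M : Subgroup G} (h : IsMaximalIn K M) :
    IsCoatom (K.subgroupOf M) := by
  have hinj : Function.Injective M.subtype := M.subtype_injective
  constructor
  · rw [Ne, Subgroup.subgroupOf_eq_top]
    exact fun hle => h.1.not_ge hle
  · intro b hb
    have hmapK : (K.subgroupOf M).map M.subtype = K := by
      rw [Subgroup.subgroupOf_map_subtype]
      exact inf_eq_left.mpr h.1.le
    have hKb : K < b.map M.subtype := by
      rw [← hmapK]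
      exact lt_of_le_of_ne
        ((Subgroup.map_le_map_iff_of_injective hinj).mpr hb.le)
        (fun he => hb.ne (Subgroup.map_injective hinj he))
    have hbM : b.map M.subtype ≤ M := by
      rintro x ⟨y, _, rfl⟩
      exact y.2
    have hbeq := h.2 _ hKb hbM
    have htop : Subgroup.map M.subtype ⊤ = M := by
      rw [← MonoidHom.range_eq_map]
      exact Subgroup.range_subtype M
    exact Subgroup.map_injective hinj (by rw [hbeq, htop])

/-- Existence of a subgroup maximal in `M` above a given proper subgroup. -/
lemma exists_maximalIn {G : Type*} [Group G] [Finite G] {P M : Subgroup G} (h : P < M) :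
    ∃ H : Subgroup G, P ≤ H ∧ IsMaximalIn H M := by
  have hfin : Finite (Subgroup G) :=
    Finite.of_injective (fun L : Subgroup G => (L : Set G)) SetLike.coe_injective
  have hS : ({L : Subgroup G | P ≤ L ∧ L < M}).Finite := Set.toFinite _
  obtain ⟨H, hHS, hHmax⟩ := Set.Finite.exists_maximalFor (fun L : Subgroup G => Nat.card L)
    {L : Subgroup G | P ≤ L ∧ L < M} hS ⟨P, le_refl P, h⟩
  refine ⟨H, hHS.1, hHS.2, fun K' hK' hK'M => ?_⟩
  by_contra hne
  have hK'S : K' ∈ {L : Subgroup G | P ≤ L ∧ L < M} :=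
    ⟨hHS.1.trans hK'.le, lt_of_le_of_ne hK'M hne⟩
  have hcard := hHmax hK'S (Subgroup.card_le_of_le hK'.le)
  exact hK'.ne (Subgroup.eq_of_le_of_card_ge hK'.le hcard)

theorem indices_prime_sigma_of_normal_chain
    {G : Type*} [Group G] [Finite G]
    (hπ : ∃ p q : ℕ, p.Prime ∧ q.Prime ∧ p ≠ q ∧ p ∣ Nat.card G ∧ q ∣ Nat.card G)
    (hhall : ∀ H : Subgroup G, Is2Maximal H → IsHallSubgroup H)
    (hns : ¬ IsSupersolvable G)
    (K M : Subgroup G) (hKM : IsMaximalIn K M) (hM : IsCoatom M)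
    (hKn : (K.subgroupOf M).Normal) (hMn : M.Normal) :
    ∃ p q : ℕ, p.Prime ∧ q.Prime ∧ p ≠ q ∧
      M.index = p ∧ K.relIndex M = q ∧
      p ∣ Nat.card G ∧ ¬ p ^ 2 ∣ Nat.card G ∧
      q ∣ Nat.card G ∧ ¬ q ^ 2 ∣ Nat.card G := by
  set p := M.index with hpdef
  set q := K.relIndex M with hqdef
  have hp : p.Prime := index_prime_of_coatom_normal M hM
  have hq : q.Prime := index_prime_of_coatom_normal (K.subgroupOf M) (coatom_subgroupOf hKM)
  have hKleM : K ≤ M := hKM.1.le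
  have hidx : q * p = K.index := Subgroup.relIndex_mul_index hKleM
  have hcard : Nat.card K * K.index = Nat.card G := Subgroup.card_mul_index K
  have hHall : Nat.Coprime (Nat.card K) K.index := hhall K ⟨M, hM, hKM⟩
  have hKpos : 0 < Nat.card K := Nat.card_pos
  -- p and q do not divide |K|
  have hpK : ¬ p ∣ Nat.card K := by
    intro hd
    have : p ∣ Nat.gcd (Nat.card K) K.index :=
      Nat.dvd_gcd hd ⟨q, by rw [← hidx]; ring⟩
    rw [hHall] at this
    exact hp.ne_one (Nat.dvd_one.mp this)
  have hqK : ¬ q ∣ Nat.card K := by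
    intro hd
    have : q ∣ Nat.gcd (Nat.card K) K.index :=
      Nat.dvd_gcd hd ⟨p, hidx.symm⟩
    rw [hHall] at this
    exact hq.ne_one (Nat.dvd_one.mp this)
  -- card of M
  have hcardM : Nat.card M = Nat.card K * q := by
    have e1 : Nat.card (K.subgroupOf M) * (K.subgroupOf M).index = Nat.card M :=
      Subgroup.card_mul_index (K.subgroupOf M)
    have e2 : Nat.card (K.subgroupOf M) = Nat.card K :=
      Nat.card_congr (Subgroup.subgroupOfEquivOfLe hKleM).toEquiv
    rw [e2] at e1
    exact e1.symm
  -- p ≠ q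
  have hpq : p ≠ q := by
    intro he
    by_cases h1 : Nat.card K = 1
    · -- |G| = p * p, contradicting the existence of two primes
      have hG : Nat.card G = p * p := by
        rw [← hcard, h1, one_mul, ← hidx, ← he]
      obtain ⟨p', q', hp', hq', hne, hpd, hqd⟩ := hπ
      rw [hG] at hpd hqd
      have hp'p : p' = p := by
        rcases (Nat.Prime.dvd_mul hp').mp hpd with h | h <;>
          exact (Nat.prime_dvd_prime_iff_eq hp' hp).mp h
      have hq'p : q' = p := by
        rcases (Nat.Prime.dvd_mul hq').mp hqd with h | h <;>
          exact (Nat.prime_dvd_prime_iff_eq hq' hp).mp h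
      exact hne (hp'p.trans hq'p.symm)
    · -- |K| > 1 : find an element of order p in M and a maximal subgroup of M containing it
      have hpM : p ∣ Nat.card M := by
        rw [hcardM, ← he]
        exact ⟨Nat.card K, mul_comm _ _⟩
      haveI : Fact p.Prime := ⟨hp⟩
      obtain ⟨x, hx⟩ := exists_prime_orderOf_dvd_card' (G := M) p hpM
      set P := Subgroup.zpowers (x : G) with hPdef
      have hPM : P ≤ M := by
        rw [Subgroup.zpowers_le]
        exact x.2
      have hPcard : Nat.card P = p := by
        rw [Nat.card_zpowers, Subgroup.orderOf_coe, hx]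
      have hPlt : P < M := by
        refine lt_of_le_of_ne hPM (fun hPM' => ?_)
        have : Nat.card M = p := hPM' ▸ hPcard
        rw [hcardM, ← he] at this
        have h2 : 2 ≤ Nat.card K := by omega
        nlinarith [hp.two_le]
      obtain ⟨H, hPH, hHmax⟩ := exists_maximalIn hPlt
      have hHall' : Nat.Coprime (Nat.card H) H.index := hhall H ⟨M, hM, hHmax⟩
      have hpH : p ∣ Nat.card H := hPcard ▸ Subgroup.card_dvd_of_le hPH
      have hpI : p ∣ H.index := Subgroup.index_dvd_of_le hHmax.1.le
      have : p ∣ Nat.gcd (Nat.card H) H.index := Nat.dvd_gcd hpH hpI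
      rw [hHall'] at this
      exact hp.ne_one (Nat.dvd_one.mp this)
  -- square-freeness at p and q
  have hGcard : Nat.card G = Nat.card K * q * p := by
    rw [← hcard, ← hidx, mul_assoc]
  refine ⟨p, q, hp, hq, hpq, rfl, rfl, ?_, ?_, ?_, ?_⟩
  · exact Subgroup.index_dvd_card M
  · intro hd
    rw [hGcard, pow_two] at hd
    have : p ∣ Nat.card K * q := (Nat.mul_dvd_mul_iff_right hp.pos).mp hd
    rcases hp.dvd_mul.mp this with h | h
    · exact hpK h
    · exact hpq ((Nat.prime_dvd_prime_iff_eq hp hq).mp h)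
  · rw [hGcard]
    exact ⟨Nat.card K * p, by ring⟩
  · intro hd
    rw [hGcard, pow_two] at hd
    have hd' : q * q ∣ Nat.card K * p * q := by
      rw [show Nat.card K * q * p = Nat.card K * p * q by ring] at hd
      exact hd
    have : q ∣ Nat.card K * p := (Nat.mul_dvd_mul_iff_right hq.pos).mp hd'
    rcases hq.dvd_mul.mp this with h | h
    · exact hqK h
    · exact hpq.symm ((Nat.prime_dvd_prime_iff_eq hq hp).mp h)
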